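/- arXiv:1810.05959 — 2 statements merged into one kernel-verified Lean document; each statement's English description precedes it below -/
import Mathlib

section
/- If F : [0,1] → ℝ is continuous and not concave on [0,1], then there exist a natural number M ≥ 1 and integers 0 ≤ K1 < K2 < M such that F((K2+1)/M) − F(K2/M) > F((K1+1)/M) − F(K1/M). Consequently, the set function f(S) = F(|S ∩ N|/M) on a ground set containing a set N of size M fails to be submodular. -/
open Finset

section Aux

open Filter

private lemma grid_slope_aux (F : ℝ → ℝ)
    (H : ∀ M K1 K2 : ℕ, 1 ≤ M → K1 < K2 → K2 < M →
      F ((K2 + 1 : ℝ) / M) - F ((K2 : ℝ) / M) ≤ F ((K1 + 1 : ℝ) / M) - F ((K1 : ℝ) / M))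
    (M a b c : ℕ) (hab : a < b) (hbc : b < c) (hcM : c ≤ M) :
    ((b : ℝ) - a) * (F ((c : ℝ) / M) - F ((b : ℝ) / M)) ≤
      ((c : ℝ) - b) * (F ((b : ℝ) / M) - F ((a : ℝ) / M)) := by
  have hM : 1 ≤ M := by omega
  set D : ℕ → ℝ := fun k => F (((k : ℝ) + 1) / M) - F ((k : ℝ) / M) with hD
  have hbM : b < M := lt_of_lt_of_le hbc hcM
  have sum1 : ∑ i ∈ Finset.range (b - a), D (a + i) = F ((b : ℝ) / M) - F ((a : ℝ) / M) := by
    have h := Finset.sum_range_sub (fun i => F (((a + i : ℕ) : ℝ) / M)) (b - a)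
    rw [Nat.add_sub_cancel' hab.le, Nat.add_zero] at h
    rw [← h]
    refine Finset.sum_congr rfl fun i _ => ?_
    simp only [hD]; push_cast; ring_nf
  have sum2 : ∑ i ∈ Finset.range (c - b), D (b + i) = F ((c : ℝ) / M) - F ((b : ℝ) / M) := by
    have h := Finset.sum_range_sub (fun i => F (((b + i : ℕ) : ℝ) / M)) (c - b)
    rw [Nat.add_sub_cancel' hbc.le, Nat.add_zero] at h
    rw [← h]
    refine Finset.sum_congr rfl fun i _ => ?_
    simp only [hD]; push_cast; ring_nf
  have lb : ((b - a : ℕ) : ℝ) * D b ≤ ∑ i ∈ Finset.range (b - a), D (a + i) := by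
    have := Finset.card_nsmul_le_sum (Finset.range (b - a)) (fun i => D (a + i)) (D b) ?_
    · simpa [nsmul_eq_mul] using this
    · intro i hi
      rw [Finset.mem_range] at hi
      exact H M (a + i) b hM (by omega) hbM
  have ub : ∑ i ∈ Finset.range (c - b), D (b + i) ≤ ((c - b : ℕ) : ℝ) * D b := by
    have := Finset.sum_le_card_nsmul (Finset.range (c - b)) (fun i => D (b + i)) (D b) ?_
    · simpa [nsmul_eq_mul] using this
    · intro i hi
      rw [Finset.mem_range] at hi
      rcases Nat.eq_zero_or_pos i with rfl | hip
      · simp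
      · exact H M b (b + i) hM (by omega) (by omega)
  rw [sum1] at lb
  rw [sum2] at ub
  have e1 : ((b - a : ℕ) : ℝ) = (b : ℝ) - a := by
    push_cast [Nat.cast_sub hab.le]; ring
  have e2 : ((c - b : ℕ) : ℝ) = (c : ℝ) - b := by
    push_cast [Nat.cast_sub hbc.le]; ring
  rw [e1] at lb; rw [e2] at ub
  have hba : (0:ℝ) < (b : ℝ) - a := by
    have : (a:ℝ) < b := by exact_mod_cast hab
    linarith
  have hcb : (0:ℝ) < (c : ℝ) - b := by
    have : (b:ℝ) < c := by exact_mod_cast hbc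
    linarith
  nlinarith [mul_le_mul_of_nonneg_left lb hcb.le, mul_le_mul_of_nonneg_left ub hba.le]

private lemma real_slope_aux (F : ℝ → ℝ) (hcont : ContinuousOn F (Set.Icc (0:ℝ) 1))
    (H : ∀ M K1 K2 : ℕ, 1 ≤ M → K1 < K2 → K2 < M →
      F ((K2 + 1 : ℝ) / M) - F ((K2 : ℝ) / M) ≤ F ((K1 + 1 : ℝ) / M) - F ((K1 : ℝ) / M))
    {x y z : ℝ} (hx : x ∈ Set.Icc (0:ℝ) 1) (hz : z ∈ Set.Icc (0:ℝ) 1)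
    (hxy : x < y) (hyz : y < z) :
    (y - x) * (F z - F y) ≤ (z - y) * (F y - F x) := by
  have hy : y ∈ Set.Icc (0:ℝ) 1 := ⟨le_trans hx.1 hxy.le, le_trans hyz.le hz.2⟩
  set p : ℕ → ℝ := fun M => ((⌊x * (M:ℝ)⌋₊ : ℝ) / (M:ℝ)) with hp
  set q : ℕ → ℝ := fun M => ((⌊y * (M:ℝ)⌋₊ : ℝ) / (M:ℝ)) with hq
  set r : ℕ → ℝ := fun M => ((⌈z * (M:ℝ)⌉₊ : ℝ) / (M:ℝ)) with hr
  have tp : Tendsto p atTop (nhds x) :=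
    (tendsto_nat_floor_mul_div_atTop hx.1).comp tendsto_natCast_atTop_atTop
  have tq : Tendsto q atTop (nhds y) :=
    (tendsto_nat_floor_mul_div_atTop hy.1).comp tendsto_natCast_atTop_atTop
  have tr : Tendsto r atTop (nhds z) :=
    (tendsto_nat_ceil_mul_div_atTop hz.1).comp tendsto_natCast_atTop_atTop
  have memIcc : ∀ (w : ℝ), w ∈ Set.Icc (0:ℝ) 1 → ∀ᶠ M : ℕ in atTop,
      ((⌊w * (M:ℝ)⌋₊ : ℝ) / (M:ℝ)) ∈ Set.Icc (0:ℝ) 1 := by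
    intro w hw
    filter_upwards [eventually_ge_atTop 1] with M hM
    have hM0 : (0:ℝ) < M := by exact_mod_cast hM
    constructor
    · positivity
    · rw [div_le_one hM0]
      calc (⌊w * (M:ℝ)⌋₊ : ℝ) ≤ w * M := Nat.floor_le (mul_nonneg hw.1 hM0.le)
        _ ≤ 1 * M := by nlinarith [hw.2]
        _ = M := one_mul _
  have memIccC : ∀ᶠ M : ℕ in atTop, r M ∈ Set.Icc (0:ℝ) 1 := by
    filter_upwards [eventually_ge_atTop 1] with M hM
    have hM0 : (0:ℝ) < M := by exact_mod_cast hM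
    constructor
    · positivity
    · rw [div_le_one hM0]
      exact_mod_cast Nat.ceil_le.2 (by nlinarith [hz.2] : z * (M:ℝ) ≤ (M:ℝ))
  have tFp : Tendsto (fun M => F (p M)) atTop (nhds (F x)) :=
    ((hcont x hx).tendsto).comp
      (tendsto_nhdsWithin_of_tendsto_nhds_of_eventually_within _ tp (memIcc x hx))
  have tFq : Tendsto (fun M => F (q M)) atTop (nhds (F y)) :=
    ((hcont y hy).tendsto).comp
      (tendsto_nhdsWithin_of_tendsto_nhds_of_eventually_within _ tq (memIcc y hy))
  have tFr : Tendsto (fun M => F (r M)) atTop (nhds (F z)) :=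
    ((hcont z hz).tendsto).comp
      (tendsto_nhdsWithin_of_tendsto_nhds_of_eventually_within _ tr memIccC)
  have tL : Tendsto (fun M => (q M - p M) * (F (r M) - F (q M))) atTop
      (nhds ((y - x) * (F z - F y))) := (tq.sub tp).mul (tFr.sub tFq)
  have tR : Tendsto (fun M => (r M - q M) * (F (q M) - F (p M))) atTop
      (nhds ((z - y) * (F y - F x))) := (tr.sub tq).mul (tFq.sub tFp)
  refine le_of_tendsto_of_tendsto tL tR ?_
  obtain ⟨N0, hN0⟩ := exists_nat_gt (1 / (y - x))
  filter_upwards [eventually_ge_atTop (max N0 1)] with M hM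
  have hM1 : 1 ≤ M := le_trans (le_max_right _ _) hM
  have hMN0 : (N0:ℝ) ≤ (M:ℝ) := by exact_mod_cast le_trans (le_max_left _ _) hM
  have hM0 : (0:ℝ) < M := by exact_mod_cast hM1
  set a := ⌊x * (M:ℝ)⌋₊
  set b := ⌊y * (M:ℝ)⌋₊
  set c := ⌈z * (M:ℝ)⌉₊
  have hgap : 1 < (y - x) * M := by
    have h1 : 1 / (y - x) < (M:ℝ) := lt_of_lt_of_le hN0 hMN0
    have h2 : 0 < y - x := sub_pos.2 hxy
    rw [div_lt_iff₀ h2] at h1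
    nlinarith
  have hab : a < b := by
    have h1 : (a : ℝ) ≤ x * M := Nat.floor_le (mul_nonneg hx.1 hM0.le)
    have h2 : y * M < (b : ℝ) + 1 := Nat.lt_floor_add_one _
    have : (a : ℝ) < (b : ℝ) := by nlinarith
    exact_mod_cast this
  have hbc : b < c := by
    have h1 : (b : ℝ) ≤ y * M := Nat.floor_le (mul_nonneg hy.1 hM0.le)
    have h2 : z * M ≤ (c : ℝ) := Nat.le_ceil _
    have : (b : ℝ) < (c : ℝ) := by nlinarith
    exact_mod_cast this
  have hcM : c ≤ M := Nat.ceil_le.2 (by nlinarith [hz.2] : z * (M:ℝ) ≤ (M:ℝ))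
  have key := grid_slope_aux F H M a b c hab hbc hcM
  have hsub1 : q M - p M = (M:ℝ)⁻¹ * ((b:ℝ) - a) := by
    simp only [hp, hq]; ring
  have hsub2 : r M - q M = (M:ℝ)⁻¹ * ((c:ℝ) - b) := by
    simp only [hq, hr]; ring
  have hFp : p M = (a:ℝ)/M := rfl
  have hFq : q M = (b:ℝ)/M := rfl
  have hFr : r M = (c:ℝ)/M := rfl
  rw [hsub1, hsub2, hFp, hFq, hFr]
  have := mul_le_mul_of_nonneg_left key (show (0:ℝ) ≤ (M:ℝ)⁻¹ by positivity)
  linarith [this]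

end Aux

theorem stmt_2 (F : ℝ → ℝ) (hcont : ContinuousOn F (Set.Icc (0:ℝ) 1))
    (hnc : ¬ ConcaveOn ℝ (Set.Icc (0:ℝ) 1) F) :
    ∃ M K1 K2 : ℕ, 1 ≤ M ∧ K1 < K2 ∧ K2 < M ∧
      F ((K2 + 1 : ℝ) / M) - F ((K2 : ℝ) / M) >
        F ((K1 + 1 : ℝ) / M) - F ((K1 : ℝ) / M) ∧
      -- consequently, f(S) = F(|S ∩ N|/M) on a ground set containing a set N
      -- of size M fails to be submodular
      (∀ (V : Type) [Fintype V] [DecidableEq V] (N : Finset V), N.card = M →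
        ∃ (S T : Finset V) (u : V), S ⊆ T ∧ u ∉ T ∧
          F (((insert u T ∩ N).card : ℝ) / M) - F (((T ∩ N).card : ℝ) / M) >
            F (((insert u S ∩ N).card : ℝ) / M) - F (((S ∩ N).card : ℝ) / M)) := by
  have key : ∃ M K1 K2 : ℕ, 1 ≤ M ∧ K1 < K2 ∧ K2 < M ∧
      F ((K2 + 1 : ℝ) / M) - F ((K2 : ℝ) / M) >
        F ((K1 + 1 : ℝ) / M) - F ((K1 : ℝ) / M) := by
    by_contra hcon
    push_neg at hcon
    apply hnc
    refine LinearOrder.concaveOn_of_lt (convex_Icc 0 1) ?_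
    intro x hx y hy hxy a b ha hb hab
    simp only [smul_eq_mul]
    have hb' : b = 1 - a := by linarith
    subst hb'
    have hmx : x < a * x + (1 - a) * y := by nlinarith [mul_pos (sub_pos.2 hb) (sub_pos.2 hxy)]
    have hmy : a * x + (1 - a) * y < y := by nlinarith [mul_pos ha (sub_pos.2 hxy)]
    have hslope := real_slope_aux F hcont hcon hx hy hmx hmy
    nlinarith [hslope, sub_pos.2 hxy]
  obtain ⟨M, K1, K2, hM, h12, h2M, hgap⟩ := key
  refine ⟨M, K1, K2, hM, h12, h2M, hgap, ?_⟩
  intro V _ _ N hN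
  -- build T ⊆ N with card K2, S ⊆ T with card K1, u ∈ N \ T
  obtain ⟨T, hTN, hTcard⟩ := Finset.exists_subset_card_eq (s := N) (n := K2) (by omega)
  obtain ⟨S, hST, hScard⟩ := Finset.exists_subset_card_eq (s := T) (n := K1) (by omega)
  have hSN : S ⊆ N := hST.trans hTN
  have hNT : (N \ T).Nonempty := by
    rw [← Finset.card_pos, Finset.card_sdiff_of_subset hTN]
    omega
  obtain ⟨u, hu⟩ := hNT
  rw [Finset.mem_sdiff] at hu
  refine ⟨S, T, u, hST, hu.2, ?_⟩
  have huS : u ∉ S := fun h => hu.2 (hST h)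
  have hiT : insert u T ∩ N = insert u T := by
    rw [Finset.inter_eq_left]
    exact Finset.insert_subset hu.1 hTN
  have hiS : insert u S ∩ N = insert u S := by
    rw [Finset.inter_eq_left]
    exact Finset.insert_subset hu.1 hSN
  have hT : T ∩ N = T := Finset.inter_eq_left.2 hTN
  have hS : S ∩ N = S := Finset.inter_eq_left.2 hSN
  rw [hiT, hiS, hT, hS, Finset.card_insert_of_notMem hu.2,
    Finset.card_insert_of_notMem huS, hTcard, hScard]
  push_cast
  convert hgap using 3 <;> ring
end

section
/- Let σ : 2^V → ℝ≥0 be monotone and submodular with σ(∅) ≥ 0, and let S be the set produced by the greedy algorithm that for k iterations adds the element with maximum marginal gain. Then σ(S) ≥ (1 − 1/e) · max_{|T| ≤ k} σ(T). -/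
open Finset

lemma greedy_sum_bound {V : Type*} [DecidableEq V]
    (σ : Finset V → ℝ)
    (hmono : ∀ S T : Finset V, S ⊆ T → σ S ≤ σ T)
    (hsub : ∀ S T : Finset V, S ⊆ T → ∀ u ∉ T,
      σ (insert u T) - σ T ≤ σ (insert u S) - σ S) :
    ∀ T A : Finset V, σ (A ∪ T) ≤ σ A + ∑ u ∈ T, (σ (insert u A) - σ A) := by
  intro T
  induction T using Finset.induction_on with
  | empty => intro A; simp
  | @insert t T' ht ih =>
    intro A
    rw [Finset.union_insert, Finset.sum_insert ht]
    by_cases htA : t ∈ A ∪ T'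
    · rw [Finset.insert_eq_self.mpr htA]
      have h1 := ih A
      have h2 : 0 ≤ σ (insert t A) - σ A := by
        have := hmono A (insert t A) (Finset.subset_insert t A)
        linarith
      linarith
    · have h1 := hsub A (A ∪ T') Finset.subset_union_left t htA
      have h2 := ih A
      linarith

theorem stmt_12 {V : Type*} [Fintype V] [DecidableEq V] [Nonempty V]
    (σ : Finset V → ℝ)
    (hnonneg : ∀ S : Finset V, 0 ≤ σ S)
    (hmono : ∀ S T : Finset V, S ⊆ T → σ S ≤ σ T)
    (hsub : ∀ S T : Finset V, S ⊆ T → ∀ u ∉ T,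
      σ (insert u T) - σ T ≤ σ (insert u S) - σ S)
    (k : ℕ) (S : ℕ → Finset V) (hS0 : S 0 = ∅)
    (hgreedy : ∀ i < k, ∃ u : V, S (i + 1) = insert u (S i) ∧
      ∀ v : V, σ (insert v (S i)) - σ (S i) ≤ σ (insert u (S i)) - σ (S i)) :
    ∀ T : Finset V, T.card ≤ k → σ (S k) ≥ (1 - 1 / Real.exp 1) * σ T := by
  intro T hT
  rcases Nat.eq_zero_or_pos k with hk0 | hkpos
  · subst hk0
    have hTe : T = ∅ := Finset.card_eq_zero.mp (Nat.le_zero.mp hT)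
    subst hTe
    rw [hS0]
    have h1 := hnonneg (∅ : Finset V)
    have h2 : 0 < Real.exp 1 := Real.exp_pos 1
    have h3 : 0 < 1 / Real.exp 1 := by positivity
    nlinarith
  · have hkR : (0:ℝ) < (k:ℝ) := by exact_mod_cast hkpos
    set c : ℝ := 1 - 1 / (k:ℝ) with hc
    have hc0 : 0 ≤ c := by
      rw [hc]
      have : 1 / (k:ℝ) ≤ 1 := by
        rw [div_le_one hkR]; exact_mod_cast hkpos
      linarith
    -- step inequality
    have step : ∀ i < k, σ T - σ (S (i+1)) ≤ c * (σ T - σ (S i)) := by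
      intro i hi
      obtain ⟨u, hu1, hu2⟩ := hgreedy i hi
      set A := S i
      have hD : 0 ≤ σ (S (i+1)) - σ A := by
        rw [hu1]
        have := hmono A (insert u A) (Finset.subset_insert u A)
        linarith
      have hsum : σ T ≤ σ A + (T.card : ℝ) * (σ (S (i+1)) - σ A) := by
        have h1 : σ T ≤ σ (A ∪ T) := hmono T (A ∪ T) Finset.subset_union_right
        have h2 := greedy_sum_bound σ hmono hsub T A
        have h3 : ∑ v ∈ T, (σ (insert v A) - σ A) ≤
            (T.card : ℝ) * (σ (S (i+1)) - σ A) := by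
          have := Finset.sum_le_card_nsmul T (fun v => σ (insert v A) - σ A)
            (σ (S (i+1)) - σ A) (fun v _ => by rw [hu1]; exact hu2 v)
          simpa [nsmul_eq_mul] using this
        linarith
      have hcard : (T.card : ℝ) ≤ (k:ℝ) := by exact_mod_cast hT
      have h4 : σ T - σ A ≤ (k:ℝ) * (σ (S (i+1)) - σ A) := by
        calc σ T - σ A ≤ (T.card : ℝ) * (σ (S (i+1)) - σ A) := by linarith
          _ ≤ (k:ℝ) * (σ (S (i+1)) - σ A) := by
              exact mul_le_mul_of_nonneg_right hcard hD
      rw [hc]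
      have : (1 - 1/(k:ℝ)) * (σ T - σ A) = (σ T - σ A) - (σ T - σ A)/(k:ℝ) := by
        field_simp
      rw [this, ← sub_nonneg]
      have expand : (σ T - σ A) - (σ T - σ A)/(k:ℝ) - (σ T - σ (S (i+1)))
          = ((k:ℝ) * (σ (S (i+1)) - σ A) - (σ T - σ A)) / (k:ℝ) := by
        field_simp; ring
      rw [expand]
      apply div_nonneg _ (le_of_lt hkR)
      linarith
    -- iterate
    have iter : ∀ i ≤ k, σ T - σ (S i) ≤ c ^ i * (σ T - σ (S 0)) := by
      intro i
      induction i with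
      | zero => intro _; simp
      | succ n ihn =>
        intro hn
        have hnk : n < k := Nat.lt_of_succ_le hn
        have h1 := step n hnk
        have h2 := ihn (Nat.le_of_lt hnk)
        calc σ T - σ (S (n+1)) ≤ c * (σ T - σ (S n)) := h1
          _ ≤ c * (c ^ n * (σ T - σ (S 0))) := mul_le_mul_of_nonneg_left h2 hc0
          _ = c ^ (n+1) * (σ T - σ (S 0)) := by ring
    have hfinal := iter k le_rfl
    have hck : c ^ k ≤ 1 / Real.exp 1 := by
      have h1 : c ≤ Real.exp (-(1/(k:ℝ))) := by
        have := Real.add_one_le_exp (-(1/(k:ℝ)))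
        rw [hc]; linarith
      have h2 : c ^ k ≤ Real.exp (-(1/(k:ℝ))) ^ k :=
        pow_le_pow_left₀ hc0 h1 k
      have h3 : Real.exp (-(1/(k:ℝ))) ^ k = Real.exp ((k:ℝ) * (-(1/(k:ℝ)))) := by
        rw [← Real.exp_nat_mul]
      have h4 : (k:ℝ) * (-(1/(k:ℝ))) = -1 := by
        field_simp
      rw [h3, h4] at h2
      rw [Real.exp_neg] at h2
      rw [one_div]
      exact h2
    have hg0 : σ T - σ (S 0) ≤ σ T := by
      have := hnonneg (S 0); linarith
    have hck0 : 0 ≤ c ^ k := pow_nonneg hc0 k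
    have hbound : c ^ k * (σ T - σ (S 0)) ≤ (1 / Real.exp 1) * σ T := by
      rcases le_or_gt 0 (σ T - σ (S 0)) with h | h
      · calc c ^ k * (σ T - σ (S 0)) ≤ (1 / Real.exp 1) * (σ T - σ (S 0)) :=
              mul_le_mul_of_nonneg_right hck h
          _ ≤ (1 / Real.exp 1) * σ T := by
              apply mul_le_mul_of_nonneg_left hg0 (by positivity)
      · have : c ^ k * (σ T - σ (S 0)) ≤ 0 := mul_nonpos_of_nonneg_of_nonpos hck0 (le_of_lt h)
        have h2 : 0 ≤ (1 / Real.exp 1) * σ T := by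
          apply mul_nonneg (by positivity) (hnonneg T)
        linarith
    have := hnonneg T
    nlinarith [hfinal, hbound]
end
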